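/- The β-distance d_β(A,B) := (2√(1/n−β)/|β|)·( (det(A)^{β/2} − det(B)^{β/2})² + 4(det A · det B)^{β/2} sin²(γ/2) )^{1/2}, where γ = γ_β(A,B), converges to the affine-invariant Riemannian distance δ(A,B) as β → 0, for any fixed symmetric positive-definite A, B. -/

import Mathlib

open Matrix

open Classical in
/-- The affine-invariant Riemannian distance `δ(M,N) = (∑ i, ln² λᵢ)^{1/2}`, where the `λᵢ`
are the eigenvalues of `M⁻¹N`, computed via the symmetric matrix `M^{-1/2} N M^{-1/2}`
(which has the same eigenvalues). Junk value `0` outside the positive-definite cone. -/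
noncomputable def aiDist {n : ℕ} (M N : Matrix (Fin n) (Fin n) ℝ) : ℝ :=
  if hM : M.PosSemidef then
    if h : ((hM.1.eigenvectorUnitary.1 * diagonal ((RCLike.ofReal : ℝ → ℝ) ∘ (√·) ∘ hM.1.eigenvalues) *
        (star hM.1.eigenvectorUnitary : Matrix (Fin n) (Fin n) ℝ))⁻¹ * N *
        (hM.1.eigenvectorUnitary.1 * diagonal ((RCLike.ofReal : ℝ → ℝ) ∘ (√·) ∘ hM.1.eigenvalues) *
        (star hM.1.eigenvectorUnitary : Matrix (Fin n) (Fin n) ℝ))⁻¹).IsHermitian then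
      Real.sqrt (∑ i, Real.log (h.eigenvalues i) ^ 2)
    else 0
  else 0

/-- The measure of linear independence `γ_β(A,B)`. -/
noncomputable def gammaBeta (n : ℕ) (β : ℝ) (A B : Matrix (Fin n) (Fin n) ℝ) : ℝ :=
  |β| / (2 * Real.sqrt (1 / n - β)) *
    aiDist (A.det ^ (-(1:ℝ) / n) • A) (B.det ^ (-(1:ℝ) / n) • B)

section Helpers
open Polynomial
open scoped MatrixOrder

lemma expl_sqrt_eq {m : ℕ} {M : Matrix (Fin m) (Fin m) ℝ} (hM : M.PosSemidef) :
    hM.1.eigenvectorUnitary.1 * diagonal ((RCLike.ofReal : ℝ → ℝ) ∘ (√·) ∘ hM.1.eigenvalues) *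
      (star hM.1.eigenvectorUnitary : Matrix (Fin m) (Fin m) ℝ) = CFC.sqrt M := by
  rw [CFC.sqrt_eq_cfc, cfc_nnreal_eq_real _ M hM.nonneg, hM.1.cfc_eq]
  simp only [IsHermitian.cfc, Unitary.conjStarAlgAut_apply, Unitary.coe_star]
  congr 3
  funext i
  simp only [Function.comp_apply, Real.coe_sqrt, Real.coe_toNNReal',
    max_eq_left (hM.eigenvalues_nonneg i)]



lemma charpoly_unitary_conj {m : ℕ} (U : Matrix.unitaryGroup (Fin m) ℝ)
    (A : Matrix (Fin m) (Fin m) ℝ) :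
    ((U : Matrix (Fin m) (Fin m) ℝ) * A * star (U : Matrix (Fin m) (Fin m) ℝ)).charpoly
      = A.charpoly := by
  set Uc := (U : Matrix (Fin m) (Fin m) ℝ) with hUc
  have hUV : Uc * star Uc = 1 := mem_unitaryGroup_iff.mp U.2
  have hVU : star Uc * Uc = 1 := mem_unitaryGroup_iff'.mp U.2
  set f : ℝ →+* ℝ[X] := (C : ℝ →+* ℝ[X]) with hf
  have hmap1 : (Uc.map f) * ((star Uc).map f) = 1 := by
    rw [← Matrix.map_mul, hUV, Matrix.map_one f f.map_zero f.map_one]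
  have hscal : Matrix.scalar (Fin m) (X : ℝ[X]) = (X : ℝ[X]) • (1 : Matrix (Fin m) (Fin m) ℝ[X]) := by
    ext i j
    by_cases h : i = j <;> simp [h, Matrix.scalar_apply, Matrix.one_apply, Matrix.diagonal_apply]
  have key : charmatrix (Uc * A * star Uc) = Uc.map f * charmatrix A * (star Uc).map f := by
    unfold charmatrix
    rw [RingHom.mapMatrix_apply, RingHom.mapMatrix_apply, Matrix.map_mul, Matrix.map_mul]
    rw [Matrix.mul_sub, Matrix.sub_mul, hscal]
    congr 1
    rw [mul_smul_comm, smul_mul_assoc, Matrix.mul_one, hmap1]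
  have hmap2 : ((star Uc).map f) * (Uc.map f) = 1 := by
    rw [← Matrix.map_mul, hVU, Matrix.map_one f f.map_zero f.map_one]
  rw [Matrix.charpoly, Matrix.charpoly, key, Matrix.det_mul, Matrix.det_mul]
  rw [mul_comm, ← mul_assoc, ← Matrix.det_mul, hmap2, Matrix.det_one, one_mul]

lemma charpoly_diagonal_real {m : ℕ} (d : Fin m → ℝ) :
    (Matrix.diagonal d).charpoly = ∏ i, (X - C (d i)) := by
  rw [Matrix.charpoly_of_upperTriangular _ (Matrix.blockTriangular_diagonal d)]
  simp

lemma charpoly_isHermitian {m : ℕ} {A : Matrix (Fin m) (Fin m) ℝ} (hA : A.IsHermitian) :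
    A.charpoly = ∏ i, (X - C (hA.eigenvalues i)) := by
  conv_lhs => rw [hA.spectral_theorem, Unitary.conjStarAlgAut_apply]
  rw [charpoly_unitary_conj]
  have : (RCLike.ofReal ∘ hA.eigenvalues : Fin m → ℝ) = hA.eigenvalues := by
    funext i; simp [RCLike.ofReal]
  rw [this, charpoly_diagonal_real]



lemma multiset_of_prod_X_sub_C {m : ℕ} (f g : Fin m → ℝ)
    (h : ∏ i, (X - C (f i)) = ∏ i, (X - C (g i))) :
    Multiset.map f Finset.univ.val = Multiset.map g Finset.univ.val := by
  have hf : ((Finset.univ.val.map f).map (fun a : ℝ => X - C a)).prod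
      = ∏ i, (X - C (f i)) := by
    rw [Multiset.map_map]; rfl
  have hg : ((Finset.univ.val.map g).map (fun a : ℝ => X - C a)).prod
      = ∏ i, (X - C (g i)) := by
    rw [Multiset.map_map]; rfl
  calc Multiset.map f Finset.univ.val
      = ((Finset.univ.val.map f).map (fun a : ℝ => X - C a)).prod.roots :=
        (roots_multiset_prod_X_sub_C _).symm
    _ = ((Finset.univ.val.map g).map (fun a : ℝ => X - C a)).prod.roots := by
        rw [hf, h, ← hg]
    _ = Multiset.map g Finset.univ.val := roots_multiset_prod_X_sub_C _



lemma sum_eig_smul {m : ℕ} {H : Matrix (Fin m) (Fin m) ℝ} (hH : H.IsHermitian) {c : ℝ}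
    (hcH : (c • H).IsHermitian) (F : ℝ → ℝ) :
    ∑ i, F (hcH.eigenvalues i) = ∑ i, F (c * hH.eigenvalues i) := by
  have e : (hH.eigenvectorUnitary : Matrix (Fin m) (Fin m) ℝ)
      * (c • Matrix.diagonal (RCLike.ofReal ∘ hH.eigenvalues))
      * star (hH.eigenvectorUnitary : Matrix (Fin m) (Fin m) ℝ) = c • H := by
    rw [mul_smul_comm, smul_mul_assoc]
    conv_rhs => rw [hH.spectral_theorem, Unitary.conjStarAlgAut_apply]
  have hdiag : (c • Matrix.diagonal (RCLike.ofReal ∘ hH.eigenvalues) :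
      Matrix (Fin m) (Fin m) ℝ) = Matrix.diagonal (fun i => c * hH.eigenvalues i) := by
    rw [← Matrix.diagonal_smul]
    congr 1
  have h2 : (c • H).charpoly = ∏ i, (X - C (c * hH.eigenvalues i)) := by
    rw [← e, hdiag, charpoly_unitary_conj, charpoly_diagonal_real]
  have h1 : (c • H).charpoly = ∏ i, (X - C (hcH.eigenvalues i)) := charpoly_isHermitian hcH
  have hmul := multiset_of_prod_X_sub_C _ _ (h1.symm.trans h2)
  calc ∑ i, F (hcH.eigenvalues i)
      = ((Finset.univ.val.map hcH.eigenvalues).map F).sum := by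
        rw [Multiset.map_map]; rfl
    _ = ((Finset.univ.val.map (fun i => c * hH.eigenvalues i)).map F).sum := by rw [hmul]
    _ = ∑ i, F (c * hH.eigenvalues i) := by rw [Multiset.map_map]; rfl




lemma psd_smul {m : ℕ} {A : Matrix (Fin m) (Fin m) ℝ} (hA : A.PosSemidef) {c : ℝ}
    (hc : 0 ≤ c) : (c • A).PosSemidef := by
  refine ⟨?_, fun x => ?_⟩
  · show (c • A)ᴴ = c • A
    rw [Matrix.conjTranspose_smul, hA.1]
    simp
  · exact (hA.smul hc).2 x

lemma aiDist_nonneg {m : ℕ} (M N : Matrix (Fin m) (Fin m) ℝ) : 0 ≤ aiDist M N := by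
  unfold aiDist
  split_ifs <;> first | exact Real.sqrt_nonneg _ | exact le_refl 0

lemma aiDist_eq {m : ℕ} (hm : 0 < m) (A B : Matrix (Fin m) (Fin m) ℝ)
    (hA : A.PosDef) (hB : B.PosDef) :
    aiDist A B = Real.sqrt ((aiDist (A.det ^ (-(1:ℝ)/m) • A) (B.det ^ (-(1:ℝ)/m) • B))^2
      + (Real.log A.det - Real.log B.det)^2 / m) := by
  have hmR : (0:ℝ) < (m:ℝ) := by exact_mod_cast hm
  have hdA : (0:ℝ) < A.det := hA.det_pos
  have hdB : (0:ℝ) < B.det := hB.det_pos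
  set hMA := hA.posSemidef with hMAdef
  set S := CFC.sqrt A with hSdef
  have hS : S.PosSemidef := (CFC.sqrt_nonneg A).posSemidef
  have hSinv : S⁻¹.PosSemidef := hS.inv
  -- H and its properties
  set H := S⁻¹ * B * S⁻¹ with hHdef
  have hHpsd : H.PosSemidef := by
    have h := hB.posSemidef.conjTranspose_mul_mul_same (B := S⁻¹)
    rwa [hSinv.1] at h
  have hH : H.IsHermitian := hHpsd.1
  have hdS : S.det * S.det = A.det := by rw [← Matrix.det_mul, ← sq, CFC.sq_sqrt A hMA.nonneg]
  have hdSne : S.det ≠ 0 := by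
    intro h; rw [h, mul_zero] at hdS; exact hdA.ne' hdS.symm
  have hdetH : H.det = B.det / A.det := by
    rw [hHdef, Matrix.det_mul, Matrix.det_mul, Matrix.det_nonsing_inv,
      Ring.inverse_eq_inv']
    field_simp [← hdS]
    rw [← hdS]; ring
  have hdetHpos : 0 < H.det := hdetH ▸ div_pos hdB hdA
  have hprod : ∏ i, hH.eigenvalues i = H.det := by
    rw [hH.det_eq_prod_eigenvalues]
    norm_num
  have hevpos : ∀ i, 0 < hH.eigenvalues i := by
    intro i
    rcases lt_or_eq_of_le (hHpsd.eigenvalues_nonneg i) with h | h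
    · exact h
    · exfalso
      have : ∏ j, hH.eigenvalues j = 0 := Finset.prod_eq_zero (Finset.mem_univ i) h.symm
      rw [hprod] at this
      exact hdetHpos.ne' this
  -- unfold aiDist A B
  have hAB : aiDist A B = Real.sqrt (∑ i, Real.log (hH.eigenvalues i) ^ 2) := by
    unfold aiDist
    rw [dif_pos hMA]
    simp only [expl_sqrt_eq hMA, ← hSdef]
    rw [dif_pos hH]
  -- normalized matrices
  set ca := A.det ^ (-(1:ℝ)/(m:ℝ)) with hcadef
  set cb := B.det ^ (-(1:ℝ)/(m:ℝ)) with hcbdef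
  have hca : 0 < ca := Real.rpow_pos_of_pos hdA _
  have hcb : 0 < cb := Real.rpow_pos_of_pos hdB _
  set r := Real.sqrt ca with hrdef
  have hr : 0 < r := Real.sqrt_pos.mpr hca
  have hrr : r * r = ca := Real.mul_self_sqrt hca.le
  have hMA' : (ca • A).PosSemidef := psd_smul hMA hca.le
  have hpsd_rS : (r • S).PosSemidef := psd_smul hS hr.le
  have hsq : (r • S)^2 = ca • A := by
    rw [_root_.smul_pow, hSdef, CFC.sq_sqrt A hMA.nonneg, Real.sq_sqrt hca.le]
  have hSroot : CFC.sqrt (ca • A) = r • S := by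
    rw [← hsq, CFC.sqrt_sq _ hpsd_rS.nonneg]
  have hinv : (r • S)⁻¹ = r⁻¹ • S⁻¹ := by
    letI := invertibleOfNonzero hr.ne'
    rw [Matrix.inv_smul (A := S) r (isUnit_iff_ne_zero.mpr hdSne), invOf_eq_inv]
  set t := ca⁻¹ * cb with htdef
  have ht : 0 < t := mul_pos (inv_pos.mpr hca) hcb
  have hHt : (CFC.sqrt (ca • A))⁻¹ * (cb • B) * (CFC.sqrt (ca • A))⁻¹ = t • H := by
    rw [hSroot, hinv]
    simp only [smul_mul_assoc, mul_smul_comm, smul_smul]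
    rw [hHdef]
    congr 1
    rw [htdef, ← hrr]
    field_simp
  have hHtH : (t • H).IsHermitian := by
    unfold Matrix.IsHermitian
    rw [Matrix.conjTranspose_smul, hH.eq]
    simp
  have hABn : aiDist (ca • A) (cb • B)
      = Real.sqrt (∑ i, Real.log (hHtH.eigenvalues i) ^ 2) := by
    unfold aiDist
    rw [dif_pos hMA']
    simp only [expl_sqrt_eq hMA', hHt]
    rw [dif_pos hHtH]
  have htrans : ∑ i, Real.log (hHtH.eigenvalues i) ^ 2
      = ∑ i, Real.log (t * hH.eigenvalues i) ^ 2 :=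
    sum_eig_smul hH hHtH (fun x => Real.log x ^ 2)
  set L := Real.log A.det - Real.log B.det with hLdef
  have hlogt : Real.log t = L / m := by
    rw [htdef, Real.log_mul (inv_ne_zero hca.ne') hcb.ne', Real.log_inv, hcadef, hcbdef,
      Real.log_rpow hdA, Real.log_rpow hdB, hLdef]
    ring
  have hsumlog : ∑ i, Real.log (hH.eigenvalues i) = -L := by
    rw [← Real.log_prod (fun i _ => (hevpos i).ne'), hprod, hdetH,
      Real.log_div hdB.ne' hdA.ne', hLdef]
    ring
  have hexp : ∑ i, Real.log (t * hH.eigenvalues i) ^ 2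
      = ∑ i, Real.log (hH.eigenvalues i) ^ 2 - L^2/m := by
    have hterm : ∀ i, Real.log (t * hH.eigenvalues i) ^ 2
        = Real.log t ^ 2 + 2 * Real.log t * Real.log (hH.eigenvalues i)
          + Real.log (hH.eigenvalues i) ^ 2 := by
      intro i
      rw [Real.log_mul ht.ne' (hevpos i).ne']
      ring
    rw [Finset.sum_congr rfl (fun i _ => hterm i), Finset.sum_add_distrib,
      Finset.sum_add_distrib, Finset.sum_const, ← Finset.mul_sum, hsumlog, hlogt,
      Finset.card_univ, Fintype.card_fin, nsmul_eq_mul]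
    field_simp
    ring
  rw [hAB, hABn, Real.sq_sqrt (Finset.sum_nonneg fun i _ => sq_nonneg _), htrans, hexp]
  congr 1
  ring


lemma abs_sin_sub_sq (x : ℝ) (hx : |x| ≤ 1) : |Real.sin x - x| ≤ x ^ 2 := by
  have key : ∀ y : ℝ, 0 ≤ y → y ≤ 1 → |Real.sin y - y| ≤ y ^ 2 := by
    intro y hy hy1
    rcases eq_or_lt_of_le hy with h | h
    · simp [← h]
    · have h1 : Real.sin y ≤ y := (Real.sin_lt h).le
      have h2 : y - y ^ 3 / 4 < Real.sin y := by
        have := Real.sin_gt_sub_cube h; linarith [pow_pos h 3]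
      have h3 : y ^ 3 ≤ y ^ 2 := pow_le_pow_of_le_one hy hy1 (by norm_num)
      rw [abs_of_nonpos (by linarith)]
      linarith
  rcases le_or_gt 0 x with h | h
  · exact key x h (le_trans (le_abs_self x) hx)
  · have h' := key (-x) (by linarith) (by rwa [abs_of_neg h] at hx)
    rw [Real.sin_neg] at h'
    calc |Real.sin x - x| = |-(Real.sin x) - -x| := by rw [← abs_neg]; ring_nf
    _ ≤ (-x) ^ 2 := h'
    _ = x ^ 2 := by ring

end Helpers

set_option maxHeartbeats 1000000 in
open Filter Topology in
theorem distBeta_tendsto_aiDist {n : ℕ} (hn : 0 < n)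
    (A B : Matrix (Fin n) (Fin n) ℝ) (hA : A.PosDef) (hB : B.PosDef) :
    Tendsto
      (fun β : ℝ =>
        2 * Real.sqrt (1 / n - β) / |β| *
          Real.sqrt ((A.det ^ (β / 2) - B.det ^ (β / 2)) ^ 2 +
            4 * (A.det * B.det) ^ (β / 2) * Real.sin (gammaBeta n β A B / 2) ^ 2))
      (𝓝[≠] 0) (𝓝 (aiDist A B)) := by
  have hnR : (0:ℝ) < (n:ℝ) := by exact_mod_cast hn
  have hnne : (0:ℝ) < 1/(n:ℝ) := by positivity
  have ha : (0:ℝ) < A.det := hA.det_pos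
  have hb : (0:ℝ) < B.det := hB.det_pos
  set s := aiDist (A.det ^ (-(1:ℝ)/(n:ℝ)) • A) (B.det ^ (-(1:ℝ)/(n:ℝ)) • B) with hsdef
  have hs0 : 0 ≤ s := aiDist_nonneg _ _
  have key : aiDist A B
      = Real.sqrt (s^2 + (Real.log A.det - Real.log B.det)^2/(n:ℝ)) := aiDist_eq hn A B hA hB
  set μ : ℝ → ℝ := fun β => s / (4 * Real.sqrt (1/(n:ℝ) - β)) with hμdef
  have hsqn : (0:ℝ) < Real.sqrt (1/(n:ℝ)) := Real.sqrt_pos.mpr hnne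
  -- continuity of μ at 0
  have hμc : Tendsto μ (𝓝 0) (𝓝 (μ 0)) := by
    apply ContinuousAt.tendsto
    apply ContinuousAt.div continuousAt_const
    · exact (continuous_const.mul (Real.continuous_sqrt.comp
        (continuous_const.sub continuous_id))).continuousAt
    · simp only [sub_zero]
      positivity
  have hμ0 : μ 0 = s / (4 * Real.sqrt (1/(n:ℝ))) := by simp [hμdef]
  -- sin reduction
  have hsin : ∀ β : ℝ, Real.sin (gammaBeta n β A B / 2) ^ 2 = Real.sin (β * μ β) ^ 2 := by
    intro β
    have h1 : gammaBeta n β A B / 2 = |β| * μ β := by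
      simp only [gammaBeta, hμdef, ← hsdef]
      ring
    rw [h1]
    rcases abs_cases β with ⟨h, _⟩ | ⟨h, _⟩
    · rw [h]
    · rw [h, neg_mul, Real.sin_neg, neg_sq]
  -- T1
  have hd1 : HasDerivAt (fun β : ℝ => Real.exp (β * (Real.log A.det / 2))
      - Real.exp (β * (Real.log B.det / 2)))
      (Real.log A.det / 2 - Real.log B.det / 2) 0 := by
    have e1 : HasDerivAt (fun β : ℝ => β * (Real.log A.det / 2)) (Real.log A.det / 2) 0 :=
      hasDerivAt_mul_const _
    have e2 : HasDerivAt (fun β : ℝ => β * (Real.log B.det / 2)) (Real.log B.det / 2) 0 :=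
      hasDerivAt_mul_const _
    have := (e1.exp).sub (e2.exp)
    simpa [Pi.sub_def] using this
  rw [hasDerivAt_iff_tendsto_slope] at hd1
  have hT1 : Tendsto (fun β : ℝ => (A.det ^ (β/2) - B.det ^ (β/2))/β) (𝓝[≠] 0)
      (𝓝 (Real.log A.det / 2 - Real.log B.det / 2)) := by
    refine hd1.congr fun β => ?_
    rw [slope_def_field, Real.rpow_def_of_pos ha, Real.rpow_def_of_pos hb,
      show Real.log A.det * (β/2) = β * (Real.log A.det / 2) from by ring,
      show Real.log B.det * (β/2) = β * (Real.log B.det / 2) from by ring]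
    simp
  -- T3
  have hT3 : Tendsto (fun β : ℝ => (A.det * B.det) ^ (β/2)) (𝓝[≠] (0:ℝ)) (𝓝 1) := by
    have hab : (0:ℝ) < A.det * B.det := mul_pos ha hb
    have hx : Tendsto (fun β : ℝ => Real.exp (Real.log (A.det*B.det) * (β/2)))
        (𝓝 0) (𝓝 1) := by
      have hcont : Continuous fun β : ℝ => Real.exp (Real.log (A.det*B.det) * (β/2)) := by
        continuity
      simpa using hcont.tendsto 0
    refine (tendsto_nhdsWithin_of_tendsto_nhds hx).congr fun β => ?_
    rw [Real.rpow_def_of_pos hab]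
  -- T2
  have hid : Tendsto (fun β : ℝ => β) (𝓝[≠] (0:ℝ)) (𝓝 0) :=
    tendsto_nhdsWithin_of_tendsto_nhds tendsto_id
  have hT2a : Tendsto μ (𝓝[≠] (0:ℝ)) (𝓝 (μ 0)) := tendsto_nhdsWithin_of_tendsto_nhds hμc
  have hu : Tendsto (fun β : ℝ => β * μ β) (𝓝[≠] (0:ℝ)) (𝓝 0) := by
    simpa using hid.mul hT2a
  have hIcc : Set.Icc (-1:ℝ) 1 ∈ 𝓝 (0:ℝ) := Icc_mem_nhds (by norm_num) (by norm_num)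
  have hev1 : ∀ᶠ β in 𝓝[≠] (0:ℝ), |β * μ β| ≤ 1 :=
    hu.eventually (eventually_of_mem hIcc fun y hy => abs_le.mpr hy)
  have hT2b : Tendsto (fun β : ℝ => (Real.sin (β * μ β) - β * μ β)/β) (𝓝[≠] (0:ℝ)) (𝓝 0) := by
    refine squeeze_zero_norm' (a := fun β => |β| * (μ β)^2) ?_ ?_
    · filter_upwards [hev1, self_mem_nhdsWithin] with β h1 h2
      have hb0 : β ≠ 0 := h2
      rw [Real.norm_eq_abs, abs_div]
      calc |Real.sin (β * μ β) - β * μ β| / |β| ≤ (β * μ β)^2 / |β| := by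
            gcongr
            exact abs_sin_sub_sq _ h1
        _ = |β| * (μ β)^2 := by
            rw [mul_pow, ← sq_abs β]
            field_simp [abs_ne_zero.mpr hb0]
    · have habs : Tendsto (fun β : ℝ => |β|) (𝓝[≠] (0:ℝ)) (𝓝 0) := by
        simpa using hid.abs
      simpa using habs.mul (hT2a.pow 2)
  have hT2 : Tendsto (fun β : ℝ => Real.sin (β * μ β)/β) (𝓝[≠] (0:ℝ)) (𝓝 (μ 0)) := by
    have h := hT2b.add hT2a
    rw [zero_add] at h
    refine h.congr' ?_
    filter_upwards [self_mem_nhdsWithin] with β hb0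
    have hbne : (β:ℝ) ≠ 0 := hb0
    field_simp
    ring
  -- combine
  set g : ℝ → ℝ := fun β => 4*(1/(n:ℝ) - β) *
      (((A.det ^ (β/2) - B.det ^ (β/2))/β)^2
        + 4*(A.det*B.det)^(β/2) * (Real.sin (β * μ β)/β)^2) with hgdef
  have hT4 : Tendsto (fun β : ℝ => 4*(1/(n:ℝ) - β)) (𝓝[≠] (0:ℝ)) (𝓝 (4*(1/(n:ℝ) - 0))) :=
    tendsto_nhdsWithin_of_tendsto_nhds
      ((continuous_const.mul (continuous_const.sub continuous_id)).tendsto 0)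
  have hg : Tendsto g (𝓝[≠] (0:ℝ))
      (𝓝 (4*(1/(n:ℝ) - 0) * ((Real.log A.det / 2 - Real.log B.det / 2)^2
        + 4*1 * (μ 0)^2))) :=
    hT4.mul ((hT1.pow 2).add ((tendsto_const_nhds.mul hT3).mul (hT2.pow 2)))
  -- value identification
  have hV : Real.sqrt (4*(1/(n:ℝ) - 0) * ((Real.log A.det / 2 - Real.log B.det / 2)^2
      + 4*1 * (μ 0)^2)) = aiDist A B := by
    rw [key]
    congr 1
    rw [hμ0, sub_zero]
    have h1 : Real.sqrt (1/(n:ℝ)) ^ 2 = 1/(n:ℝ) := Real.sq_sqrt hnne.le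
    rw [div_pow, mul_pow, h1]
    field_simp
    ring
  have hfin : Tendsto (fun β => Real.sqrt (g β)) (𝓝[≠] (0:ℝ)) (𝓝 (aiDist A B)) := by
    rw [← hV]
    exact (Real.continuous_sqrt.tendsto _).comp hg
  -- eventual equality
  refine hfin.congr' ?_
  have hmemIoo : Set.Ioo (-(1/(n:ℝ))) (1/(n:ℝ)) ∈ 𝓝 (0:ℝ) :=
    Ioo_mem_nhds (by linarith) hnne
  filter_upwards [self_mem_nhdsWithin,
    eventually_nhdsWithin_of_eventually_nhds (eventually_of_mem hmemIoo fun x hx => hx)]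
    with β hb0 hβIoo
  have hupos : (0:ℝ) ≤ 1/(n:ℝ) - β := by
    have := hβIoo.2
    linarith
  rw [hsin β]
  set X := (A.det ^ (β/2) - B.det ^ (β/2))^2
      + 4*(A.det*B.det)^(β/2) * Real.sin (β * μ β)^2 with hXdef
  have hX0 : 0 ≤ X := by
    rw [hXdef]
    have : (0:ℝ) < (A.det*B.det)^(β/2) := Real.rpow_pos_of_pos (mul_pos ha hb) _
    positivity
  have hc0 : 0 ≤ 2 * Real.sqrt (1/(n:ℝ) - β) / |β| := by positivity
  rw [show 2 * Real.sqrt (1/(n:ℝ) - β) / |β| * Real.sqrt X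
      = Real.sqrt ((2 * Real.sqrt (1/(n:ℝ) - β) / |β|)^2 * X) from by
    rw [Real.sqrt_mul (sq_nonneg _), Real.sqrt_sq hc0]]
  congr 1
  rw [hgdef, hXdef]
  have hc2 : (2 * Real.sqrt (1/(n:ℝ) - β) / |β|)^2 = 4*(1/(n:ℝ) - β)/β^2 := by
    rw [div_pow, mul_pow, Real.sq_sqrt hupos, sq_abs]
    ring
  rw [hc2]
  field_simp
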